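/- arXiv:quant-ph/0202053 — 2 statements merged into one kernel-verified Lean document; each statement's English description precedes it below -/
import Mathlib

section
/- With notation as above (Q = ∑_k c(k) σ(t_{k₁}^1) ⊗ ⋯ ⊗ σ(t_{kₙ}^n) with σ(t) = [[0, e^{-it}],[e^{it},0]], c real-valued, ∑ c(k)² arbitrary), the operator norm of Q equals max over ω ∈ {−1,1}^n of |∑_k c(k) exp(i(ω₁ t_{k₁}^1 + ⋯ + ωₙ t_{kₙ}^n))|. -/
open Matrix Finset Complex
open scoped Matrix.Norms.L2Operator

/-- The sign `±1` encoded by a Boolean (`true ↦ 1`, `false ↦ −1`). -/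
def sgn (b : Bool) : ℝ := if b then 1 else -1

/-- The coplanar spin matrix `σ(t) = [[0, e^{−it}],[e^{it},0]]`, with rows/columns indexed
by `Bool` (`true ↦ |1⟩`, `false ↦ |−1⟩`). -/
noncomputable def sigmaB (t : ℝ) : Matrix Bool Bool ℂ :=
  Matrix.of fun x y => if x = !y then Complex.exp ((sgn y : ℂ) * t * Complex.I) else 0

/-- The Bell operator `Q = ∑_k c(k) σ(t_{k₁}¹) ⊗ ⋯ ⊗ σ(t_{kₙ}ⁿ)` on `(ℂ²)^{⊗n}`. -/
noncomputable def bellOp (n r : ℕ) (c : (Fin n → Fin r) → ℝ) (t : Fin r → Fin n → ℝ) :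
    Matrix (Fin n → Bool) (Fin n → Bool) ℂ :=
  ∑ k : Fin n → Fin r,
    (c k : ℂ) • Matrix.of fun x y : Fin n → Bool => ∏ j : Fin n, sigmaB (t (k j) j) (x j) (y j)

noncomputable def lam (n r : ℕ) (c : (Fin n → Fin r) → ℝ) (t : Fin r → Fin n → ℝ)
    (ω : Fin n → Bool) : ℂ :=
  ∑ k : Fin n → Fin r,
    (c k : ℂ) * Complex.exp ((∑ j : Fin n, (sgn (ω j) * t (k j) j : ℂ)) * Complex.I)

lemma bellOp_entry (n r : ℕ) (c : (Fin n → Fin r) → ℝ) (t : Fin r → Fin n → ℝ)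
    (x y : Fin n → Bool) :
    bellOp n r c t x y = if x = (fun j => !(y j)) then lam n r c t y else 0 := by
  unfold bellOp lam
  rw [Matrix.sum_apply]
  simp only [Matrix.smul_apply, Matrix.of_apply, smul_eq_mul]
  by_cases h : x = fun j => !(y j)
  · subst h
    simp only [if_pos rfl, sigmaB, Matrix.of_apply, if_pos rfl, if_true]
    refine Finset.sum_congr rfl fun k _ => ?_
    rw [← Complex.exp_sum, Finset.sum_mul]
  · rw [if_neg h]
    refine Finset.sum_eq_zero fun k _ => ?_
    have : ∃ j, x j ≠ !(y j) := by
      by_contra hc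
      push_neg at hc
      exact h (funext hc)
    obtain ⟨j, hj⟩ := this
    rw [Finset.prod_eq_zero (Finset.mem_univ j), mul_zero]
    simp [sigmaB, hj]

lemma bellOp_mulVec (n r : ℕ) (c : (Fin n → Fin r) → ℝ) (t : Fin r → Fin n → ℝ)
    (v : (Fin n → Bool) → ℂ) (x : Fin n → Bool) :
    (bellOp n r c t *ᵥ v) x
      = lam n r c t (fun j => !(x j)) * v (fun j => !(x j)) := by
  simp only [Matrix.mulVec, dotProduct, bellOp_entry]
  rw [Finset.sum_eq_single (fun j => !(x j))]
  · rw [if_pos]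
    funext j
    simp
  · intro y _ hy
    rw [if_neg, zero_mul]
    intro hxy
    apply hy
    funext j
    have h2 := congrFun hxy j
    cases hx : x j <;> cases hyj : y j <;> simp_all
  · intro h; exact absurd (Finset.mem_univ _) h


lemma aux_opNorm {ι : Type*} [Fintype ι] [DecidableEq ι] [Nonempty ι]
    (A : Matrix ι ι ℂ) (e : ι ≃ ι) (d : ι → ℂ)
    (hA : ∀ (v : ι → ℂ) (x : ι), (A *ᵥ v) x = d x * v (e x)) :
    ‖A‖ = ⨆ x, ‖d x‖ := by
  classical
  set M := ⨆ x, ‖d x‖ with hM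
  have hbdd : BddAbove (Set.range fun x => ‖d x‖) :=
    (Set.finite_range _).bddAbove
  have hdM : ∀ x, ‖d x‖ ≤ M := fun x => le_ciSup hbdd x
  have hM0 : 0 ≤ M :=
    le_trans (norm_nonneg _) (hdM (Classical.arbitrary ι))
  rw [Matrix.l2_opNorm_def]
  apply le_antisymm
  · apply ContinuousLinearMap.opNorm_le_bound _ hM0
    intro v
    have hTv : ∀ x, (((Matrix.toEuclideanLin.trans LinearMap.toContinuousLinearMap) A) v) x
        = d x * v (e x) := fun x => hA (WithLp.ofLp v) x
    rw [EuclideanSpace.norm_eq, EuclideanSpace.norm_eq, ← Real.sqrt_sq hM0,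
      ← Real.sqrt_mul (sq_nonneg _)]
    apply Real.sqrt_le_sqrt
    rw [Finset.mul_sum]
    refine le_trans (Finset.sum_le_sum (fun x _ => ?_))
      (le_of_eq (Fintype.sum_equiv e _ _ fun x => rfl))
    rw [hTv x, norm_mul, mul_pow]
    exact mul_le_mul_of_nonneg_right
      (pow_le_pow_left₀ (norm_nonneg _) (hdM x) 2) (sq_nonneg _)
  · apply ciSup_le
    intro x₀
    set w : ι → ℂ := fun i => if i = e x₀ then 1 else 0 with hw
    have hAw : A *ᵥ w = fun x => if x = x₀ then d x₀ else 0 := by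
      funext x
      rw [hA w x]
      by_cases hxx : x = x₀
      · subst hxx
        rw [if_pos rfl, hw]
        simp
      · rw [if_neg hxx, hw]
        simp only []
        rw [if_neg (fun hc => hxx (e.injective hc)), mul_zero]
    have hle := (((Matrix.toEuclideanLin.trans LinearMap.toContinuousLinearMap) A)).le_opNorm
      ((WithLp.equiv 2 (ι → ℂ)).symm w)
    have hT : ((Matrix.toEuclideanLin.trans LinearMap.toContinuousLinearMap) A)
        ((WithLp.equiv 2 (ι → ℂ)).symm w) = (WithLp.equiv 2 (ι → ℂ)).symm (A *ᵥ w) := by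
      rfl
    rw [hT, hAw] at hle
    have h1 : (fun x => if x = x₀ then d x₀ else 0) = Pi.single x₀ (d x₀) := by
      funext x
      simp [Pi.single_apply]
    have h2 : w = Pi.single (e x₀) (1 : ℂ) := by
      funext i
      simp [hw, Pi.single_apply]
    rw [h1, h2] at hle
    have hn1 : ‖(WithLp.equiv 2 (ι → ℂ)).symm (Pi.single x₀ (d x₀))‖ = ‖d x₀‖ := by
      rw [show (WithLp.equiv 2 (ι → ℂ)).symm (Pi.single x₀ (d x₀)) = WithLp.toLp 2 (Pi.single x₀ (d x₀)) from rfl, PiLp.norm_toLp_single]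
    have hn2 : ‖(WithLp.equiv 2 (ι → ℂ)).symm (Pi.single (e x₀) (1 : ℂ))‖ = 1 := by
      rw [show (WithLp.equiv 2 (ι → ℂ)).symm (Pi.single (e x₀) (1 : ℂ)) = WithLp.toLp 2 (Pi.single (e x₀) (1 : ℂ)) from rfl, PiLp.norm_toLp_single, norm_one]
    rw [hn1, hn2, mul_one] at hle
    exact hle

/-- the (L2) operator norm of `Q` equals
`max_{ω ∈ {−1,1}ⁿ} |∑_k c(k) exp(i(ω₁ t_{k₁}¹ + ⋯ + ωₙ t_{kₙ}ⁿ))|`. -/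
theorem bellOp_norm_eq (n r : ℕ) (c : (Fin n → Fin r) → ℝ) (t : Fin r → Fin n → ℝ) :
    ‖bellOp n r c t‖ =
      ⨆ ω : Fin n → Bool,
        ‖∑ k : Fin n → Fin r,
          (c k : ℂ) *
            Complex.exp ((∑ j : Fin n, (sgn (ω j) * t (k j) j : ℂ)) * Complex.I)‖ := by
  classical
  have hνν : ∀ x : Fin n → Bool, (fun j => !((fun i => !(x i)) j)) = x :=
    fun x => funext fun j => by simp
  let e : (Fin n → Bool) ≃ (Fin n → Bool) :=
    ⟨fun x j => !(x j), fun x j => !(x j), fun x => hνν x, fun x => hνν x⟩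
  have h := aux_opNorm (bellOp n r c t) e
    (fun x => lam n r c t (fun j => !(x j)))
    (fun v x => bellOp_mulVec n r c t v x)
  show ‖bellOp n r c t‖ = ⨆ ω, ‖lam n r c t ω‖
  rw [h]
  exact e.surjective.iSup_comp (fun ω => ‖lam n r c t ω‖)
end

section
/- Fix angles θ₀^j, θ₁^j ∈ ℝ for j = 1,…,n, and let f : {0,1}^n → {±1} be uniform random. Let Λ_f = max over ω ∈ {−1,1}^n of |∑_{ε} f(ε) c_ω(ε)|, where c_ω(ε) = 2^{-n} ∏_j (e^{iωⱼθ₀^j} + (−1)^{εⱼ} e^{iωⱼθ₁^j}). Then for every λ > 0, P(Λ_f ≥ λ) ≤ 2^{n+2} exp(−λ²/4). In particular, with λ = 2(n log 2 + log(4/δ))^{1/2}, P(Λ_f ≥ λ) ≤ δ, so for fixed angles a majority of Werner–Wolf operators have norm O(√n). -/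
set_option maxHeartbeats 1000000


open Finset Complex Real
open scoped Classical

lemma sum_fun_bool {α β : Type*} [Fintype α] [DecidableEq α] [CommSemiring β]
    (g : α → Bool → β) :
    ∑ f : α → Bool, ∏ x, g x (f x) = ∏ x, (g x true + g x false) := by
  calc ∑ f : α → Bool, ∏ x, g x (f x)
      = ∏ x, ∑ b : Bool, g x b := (Fintype.prod_sum (fun x b => g x b)).symm
    _ = ∏ x, (g x true + g x false) := by
        apply Finset.prod_congr rfl; intro x _; exact Fintype.sum_bool _

lemma hoeffding_count {α : Type*} [Fintype α] [DecidableEq α] (a : α → ℝ)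
    (hs : ∑ x, a x ^ 2 ≤ 1) (t : ℝ) (ht : 0 ≤ t) :
    ((Finset.univ.filter (fun f : α → Bool => t ≤ ∑ x, sgn (f x) * a x)).card : ℝ) ≤
      (Fintype.card (α → Bool) : ℝ) * Real.exp (-t ^ 2 / 2) := by
  set S : (α → Bool) → ℝ := fun f => ∑ x, sgn (f x) * a x with hS
  have hsum : ∑ f : α → Bool, Real.exp (t * S f)
      ≤ (Fintype.card (α → Bool) : ℝ) * Real.exp (t ^ 2 / 2) := by
    have h1 : ∀ f : α → Bool, Real.exp (t * S f)
        = ∏ x, Real.exp (t * (sgn (f x) * a x)) := by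
      intro f
      rw [hS, Finset.mul_sum, Real.exp_sum]
    calc ∑ f : α → Bool, Real.exp (t * S f)
        = ∑ f : α → Bool, ∏ x, Real.exp (t * (sgn (f x) * a x)) := by
          exact Finset.sum_congr rfl fun f _ => h1 f
      _ = ∏ x, (Real.exp (t * (sgn true * a x)) + Real.exp (t * (sgn false * a x))) :=
          sum_fun_bool (fun x b => Real.exp (t * (sgn b * a x)))
      _ = ∏ x, (2 * Real.cosh (t * a x)) := by
          apply Finset.prod_congr rfl; intro x _
          rw [Real.cosh_eq]; simp [sgn]; ring
      _ ≤ ∏ x, (2 * Real.exp ((t * a x) ^ 2 / 2)) := by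
          apply Finset.prod_le_prod
          · intro x _; positivity
          · intro x _
            have := Real.cosh_le_exp_half_sq (t * a x)
            linarith
      _ = 2 ^ Fintype.card α * Real.exp (∑ x, (t * a x) ^ 2 / 2) := by
          rw [Finset.prod_mul_distrib, Finset.prod_const, Real.exp_sum]
          simp [Finset.card_univ]
      _ ≤ (Fintype.card (α → Bool) : ℝ) * Real.exp (t ^ 2 / 2) := by
          have hcard : (Fintype.card (α → Bool) : ℝ) = 2 ^ Fintype.card α := by
            simp [Fintype.card_fun]
          rw [hcard]
          apply mul_le_mul_of_nonneg_left _ (by positivity)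
          apply Real.exp_le_exp.2
          have : ∑ x, (t * a x) ^ 2 / 2 = t ^ 2 / 2 * ∑ x, a x ^ 2 := by
            rw [Finset.mul_sum]; apply Finset.sum_congr rfl; intro x _; ring
          rw [this]
          nlinarith [sq_nonneg t]
  have hmark : ((Finset.univ.filter (fun f : α → Bool => t ≤ S f)).card : ℝ) * Real.exp (t ^ 2)
      ≤ ∑ f : α → Bool, Real.exp (t * S f) := by
    calc ((Finset.univ.filter (fun f : α → Bool => t ≤ S f)).card : ℝ) * Real.exp (t ^ 2)
        ≤ ∑ f ∈ Finset.univ.filter (fun f : α → Bool => t ≤ S f), Real.exp (t * S f) := by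
          have : ∀ f ∈ Finset.univ.filter (fun f : α → Bool => t ≤ S f),
              Real.exp (t ^ 2) ≤ Real.exp (t * S f) := by
            intro f hf
            rw [Finset.mem_filter] at hf
            apply Real.exp_le_exp.2
            have := hf.2
            nlinarith
          calc ((Finset.univ.filter (fun f : α → Bool => t ≤ S f)).card : ℝ) * Real.exp (t ^ 2)
              = ∑ _f ∈ Finset.univ.filter (fun f : α → Bool => t ≤ S f), Real.exp (t ^ 2) := by
                rw [Finset.sum_const, nsmul_eq_mul]
            _ ≤ _ := Finset.sum_le_sum this
      _ ≤ ∑ f : α → Bool, Real.exp (t * S f) :=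
          Finset.sum_le_sum_of_subset_of_nonneg (Finset.filter_subset _ _)
            (fun f _ _ => (Real.exp_pos _).le)
  have hexp : (0:ℝ) < Real.exp (t ^ 2) := Real.exp_pos _
  have := le_trans hmark hsum
  have h2 : ((Finset.univ.filter (fun f : α → Bool => t ≤ S f)).card : ℝ)
      ≤ (Fintype.card (α → Bool) : ℝ) * Real.exp (t ^ 2 / 2) / Real.exp (t ^ 2) :=
    (le_div_iff₀ hexp).2 this
  calc ((Finset.univ.filter (fun f : α → Bool => t ≤ S f)).card : ℝ)
      ≤ (Fintype.card (α → Bool) : ℝ) * Real.exp (t ^ 2 / 2) / Real.exp (t ^ 2) := h2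
    _ = (Fintype.card (α → Bool) : ℝ) * Real.exp (-t ^ 2 / 2) := by
        rw [mul_div_assoc, ← Real.exp_sub]; ring_nf

/-- `c_ω(ε) = 2⁻ⁿ ∏ⱼ (e^{iωⱼθ₀ʲ} + (−1)^{εⱼ} e^{iωⱼθ₁ʲ})`, for a sign vector
`ω ∈ {−1,1}ⁿ` encoded by `ω : Fin n → Bool`. -/
noncomputable def bellCoeffOmega (n : ℕ) (θ₀ θ₁ : Fin n → ℝ) (ω ε : Fin n → Bool) : ℂ :=
  (2 : ℂ)⁻¹ ^ n *
    ∏ j : Fin n,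
      (Complex.exp ((sgn (ω j) * θ₀ j : ℝ) * Complex.I) +
        (if ε j then -1 else 1) * Complex.exp ((sgn (ω j) * θ₁ j : ℝ) * Complex.I))

lemma bell_sq_sum (n : ℕ) (θ₀ θ₁ : Fin n → ℝ) (ω : Fin n → Bool) :
    ∑ ε : Fin n → Bool, ‖bellCoeffOmega n θ₀ θ₁ ω ε‖ ^ 2 = 1 := by
  set u : Fin n → ℂ := fun j => Complex.exp ((sgn (ω j) * θ₀ j : ℝ) * Complex.I) with hu
  set v : Fin n → ℂ := fun j => Complex.exp ((sgn (ω j) * θ₁ j : ℝ) * Complex.I) with hv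
  have hu1 : ∀ j, ‖u j‖ = 1 := by
    intro j; rw [hu]; simp [Complex.norm_exp]
  have hv1 : ∀ j, ‖v j‖ = 1 := by
    intro j; rw [hv]; simp [Complex.norm_exp]
  set g : Fin n → Bool → ℝ := fun j b => ‖u j + (if b then -1 else 1) * v j‖ ^ 2
    with hg
  have key : ∀ ε : Fin n → Bool,
      ‖bellCoeffOmega n θ₀ θ₁ ω ε‖ ^ 2 = (4:ℝ)⁻¹ ^ n * ∏ j, g j (ε j) := by
    intro ε
    have hb : bellCoeffOmega n θ₀ θ₁ ω ε
        = (2:ℂ)⁻¹ ^ n * ∏ j, (u j + (if ε j then -1 else 1) * v j) := rfl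
    rw [hb, norm_mul, norm_pow, norm_inv, Complex.norm_two, Complex.norm_prod, mul_pow,
      ← Finset.prod_pow, ← pow_mul, mul_comm n 2, pow_mul]
    congr 1
    norm_num
  have gsum : ∀ j, g j true + g j false = 4 := by
    intro j
    have h1 : u j + (-1 : ℂ) * v j = u j - v j := by ring
    have h2 : u j + (1 : ℂ) * v j = u j + v j := by ring
    have hgg : g j true + g j false
        = ‖u j + (-1) * v j‖ ^ 2 + ‖u j + 1 * v j‖ ^ 2 := rfl
    rw [hgg, h1, h2, Complex.sq_norm, Complex.sq_norm, Complex.normSq_sub, Complex.normSq_add]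
    have hnu : Complex.normSq (u j) = 1 := by
      rw [← Complex.sq_norm, hu1]; norm_num
    have hnv : Complex.normSq (v j) = 1 := by
      rw [← Complex.sq_norm, hv1]; norm_num
    rw [hnu, hnv]; ring
  calc ∑ ε : Fin n → Bool, ‖bellCoeffOmega n θ₀ θ₁ ω ε‖ ^ 2
      = ∑ ε : Fin n → Bool, (4:ℝ)⁻¹ ^ n * ∏ j, g j (ε j) :=
        Finset.sum_congr rfl fun ε _ => key ε
    _ = (4:ℝ)⁻¹ ^ n * ∑ ε : Fin n → Bool, ∏ j, g j (ε j) := by rw [← Finset.mul_sum]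
    _ = (4:ℝ)⁻¹ ^ n * ∏ j, (g j true + g j false) := by rw [sum_fun_bool g]
    _ = 1 := by
        rw [Finset.prod_congr rfl fun j _ => gsum j, Finset.prod_const]
        simp [← mul_pow]

lemma single_omega (n : ℕ) (θ₀ θ₁ : Fin n → ℝ) (ω : Fin n → Bool) (lam : ℝ) (hl : 0 < lam) :
    ((Finset.univ.filter (fun f : (Fin n → Bool) → Bool =>
        lam ≤ ‖∑ ε : Fin n → Bool,
          (sgn (f ε) : ℂ) * bellCoeffOmega n θ₀ θ₁ ω ε‖)).card : ℝ) ≤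
      4 * ((Fintype.card ((Fin n → Bool) → Bool) : ℝ) * Real.exp (-lam ^ 2 / 4)) := by
  set c : (Fin n → Bool) → ℂ := bellCoeffOmega n θ₀ θ₁ ω with hc
  set t : ℝ := lam / Real.sqrt 2 with htdef
  have ht : 0 ≤ t := by positivity
  have ht2 : t ^ 2 = lam ^ 2 / 2 := by
    rw [htdef, div_pow, Real.sq_sqrt (by norm_num : (0:ℝ) ≤ 2)]
  set a1 : (Fin n → Bool) → ℝ := fun ε => (c ε).re with ha1d
  set a2 : (Fin n → Bool) → ℝ := fun ε => -(c ε).re with ha2d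
  set a3 : (Fin n → Bool) → ℝ := fun ε => (c ε).im with ha3d
  set a4 : (Fin n → Bool) → ℝ := fun ε => -(c ε).im with ha4d
  have habs : ∑ ε : Fin n → Bool, ‖c ε‖ ^ 2 = 1 := bell_sq_sum n θ₀ θ₁ ω
  have hre : ∀ ε, (c ε).re ^ 2 ≤ ‖c ε‖ ^ 2 := by
    intro ε
    rw [Complex.sq_norm, Complex.normSq_apply]
    nlinarith [sq_nonneg (c ε).im]
  have him : ∀ ε, (c ε).im ^ 2 ≤ ‖c ε‖ ^ 2 := by
    intro ε
    rw [Complex.sq_norm, Complex.normSq_apply]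
    nlinarith [sq_nonneg (c ε).re]
  have hs1 : ∑ ε, a1 ε ^ 2 ≤ 1 := habs ▸ Finset.sum_le_sum fun ε _ => hre ε
  have hs2 : ∑ ε, a2 ε ^ 2 ≤ 1 := by
    have : ∀ ε, a2 ε ^ 2 = a1 ε ^ 2 := fun ε => by rw [ha2d, ha1d]; ring
    rw [Finset.sum_congr rfl fun ε _ => this ε]; exact hs1
  have hs3 : ∑ ε, a3 ε ^ 2 ≤ 1 := habs ▸ Finset.sum_le_sum fun ε _ => him ε
  have hs4 : ∑ ε, a4 ε ^ 2 ≤ 1 := by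
    have : ∀ ε, a4 ε ^ 2 = a3 ε ^ 2 := fun ε => by rw [ha4d, ha3d]; ring
    rw [Finset.sum_congr rfl fun ε _ => this ε]; exact hs3
  have re_eq : ∀ f : (Fin n → Bool) → Bool,
      (∑ ε : Fin n → Bool, (sgn (f ε) : ℂ) * c ε).re = ∑ ε, sgn (f ε) * a1 ε := by
    intro f
    rw [Complex.re_sum]
    exact Finset.sum_congr rfl fun ε _ => Complex.re_ofReal_mul _ _
  have im_eq : ∀ f : (Fin n → Bool) → Bool,
      (∑ ε : Fin n → Bool, (sgn (f ε) : ℂ) * c ε).im = ∑ ε, sgn (f ε) * a3 ε := by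
    intro f
    rw [Complex.im_sum]
    exact Finset.sum_congr rfl fun ε _ => Complex.im_ofReal_mul _ _
  have e2 : ∀ f : (Fin n → Bool) → Bool,
      ∑ ε, sgn (f ε) * a2 ε = -∑ ε, sgn (f ε) * a1 ε := by
    intro f
    rw [← Finset.sum_neg_distrib]
    exact Finset.sum_congr rfl fun ε _ => by rw [ha2d, ha1d]; ring
  have e4 : ∀ f : (Fin n → Bool) → Bool,
      ∑ ε, sgn (f ε) * a4 ε = -∑ ε, sgn (f ε) * a3 ε := by
    intro f
    rw [← Finset.sum_neg_distrib]
    exact Finset.sum_congr rfl fun ε _ => by rw [ha4d, ha3d]; ring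
  have himp : ∀ f : (Fin n → Bool) → Bool,
      lam ≤ ‖∑ ε : Fin n → Bool, (sgn (f ε) : ℂ) * c ε‖ →
      (t ≤ ∑ ε, sgn (f ε) * a1 ε) ∨ (t ≤ ∑ ε, sgn (f ε) * a2 ε) ∨
      (t ≤ ∑ ε, sgn (f ε) * a3 ε) ∨ (t ≤ ∑ ε, sgn (f ε) * a4 ε) := by
    intro f hf
    set z : ℂ := ∑ ε : Fin n → Bool, (sgn (f ε) : ℂ) * c ε with hz
    have hz2 : lam ^ 2 ≤ z.re ^ 2 + z.im ^ 2 := by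
      have h1 : lam ^ 2 ≤ ‖z‖ ^ 2 := by
        have := pow_le_pow_left₀ hl.le hf 2
        simpa using this
      rw [Complex.sq_norm, Complex.normSq_apply] at h1
      nlinarith
    by_contra hcon
    push_neg at hcon
    obtain ⟨h1, h2, h3, h4⟩ := hcon
    rw [e2 f] at h2
    rw [e4 f] at h4
    have hre' : z.re ^ 2 < t ^ 2 := by
      have := re_eq f
      rw [← hz] at this
      rw [this]
      exact sq_lt_sq' (by linarith) h1
    have him' : z.im ^ 2 < t ^ 2 := by
      have := im_eq f
      rw [← hz] at this
      rw [this]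
      exact sq_lt_sq' (by linarith) h3
    rw [ht2] at hre' him'
    nlinarith
  have hexp_eq : Real.exp (-t ^ 2 / 2) = Real.exp (-lam ^ 2 / 4) := by
    rw [ht2]; ring_nf
  set M : ℝ := (Fintype.card ((Fin n → Bool) → Bool) : ℝ) with hM
  have hb1 := hoeffding_count a1 hs1 t ht
  have hb2 := hoeffding_count a2 hs2 t ht
  have hb3 := hoeffding_count a3 hs3 t ht
  have hb4 := hoeffding_count a4 hs4 t ht
  rw [hexp_eq] at hb1 hb2 hb3 hb4
  set F1 := Finset.univ.filter (fun f : (Fin n → Bool) → Bool => t ≤ ∑ x, sgn (f x) * a1 x)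
  set F2 := Finset.univ.filter (fun f : (Fin n → Bool) → Bool => t ≤ ∑ x, sgn (f x) * a2 x)
  set F3 := Finset.univ.filter (fun f : (Fin n → Bool) → Bool => t ≤ ∑ x, sgn (f x) * a3 x)
  set F4 := Finset.univ.filter (fun f : (Fin n → Bool) → Bool => t ≤ ∑ x, sgn (f x) * a4 x)
  have hsub : (Finset.univ.filter (fun f : (Fin n → Bool) → Bool =>
      lam ≤ ‖∑ ε : Fin n → Bool, (sgn (f ε) : ℂ) * c ε‖))
      ⊆ (F1 ∪ F2) ∪ (F3 ∪ F4) := by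
    intro f hf
    rw [Finset.mem_filter] at hf
    have := himp f hf.2
    simp only [Finset.mem_union, F1, F2, F3, F4, Finset.mem_filter, Finset.mem_univ, true_and]
    tauto
  have hcard : ((Finset.univ.filter (fun f : (Fin n → Bool) → Bool =>
      lam ≤ ‖∑ ε : Fin n → Bool, (sgn (f ε) : ℂ) * c ε‖)).card : ℝ)
      ≤ (F1.card : ℝ) + F2.card + F3.card + F4.card := by
    have h := Finset.card_le_card hsub
    have h2 : ((F1 ∪ F2) ∪ (F3 ∪ F4)).card ≤ F1.card + F2.card + F3.card + F4.card := by
      calc ((F1 ∪ F2) ∪ (F3 ∪ F4)).card ≤ (F1 ∪ F2).card + (F3 ∪ F4).card :=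
            Finset.card_union_le _ _
        _ ≤ (F1.card + F2.card) + (F3.card + F4.card) :=
            Nat.add_le_add (Finset.card_union_le _ _) (Finset.card_union_le _ _)
        _ = F1.card + F2.card + F3.card + F4.card := by ring
    exact_mod_cast le_trans h h2
  calc ((Finset.univ.filter (fun f : (Fin n → Bool) → Bool =>
      lam ≤ ‖∑ ε : Fin n → Bool, (sgn (f ε) : ℂ) * c ε‖)).card : ℝ)
      ≤ (F1.card : ℝ) + F2.card + F3.card + F4.card := hcard
    _ ≤ 4 * (M * Real.exp (-lam ^ 2 / 4)) := by
        have := hb1; have := hb2; have := hb3; have := hb4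
        linarith

/-- for fixed angles and uniformly random `f : {0,1}ⁿ → {±1}`, the quantity
`Λ_f = max_ω |∑_ε f(ε) c_ω(ε)|` satisfies `P(Λ_f ≥ λ) ≤ 2^{n+2} exp(−λ²/4)` for every
`λ > 0`; in particular for `λ = 2 (n log 2 + log(4/δ))^{1/2}`, `P(Λ_f ≥ λ) ≤ δ`. -/
theorem random_wwOp_norm_tail (n : ℕ) (θ₀ θ₁ : Fin n → ℝ) :
    (∀ lam : ℝ, 0 < lam →
      ((Finset.univ.filter (fun f : (Fin n → Bool) → Bool =>
          ∃ ω : Fin n → Bool, lam ≤ ‖∑ ε : Fin n → Bool,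
            (sgn (f ε) : ℂ) * bellCoeffOmega n θ₀ θ₁ ω ε‖)).card : ℝ) /
          (Fintype.card ((Fin n → Bool) → Bool) : ℝ) ≤
        2 ^ (n + 2) * Real.exp (-lam ^ 2 / 4)) ∧
    (∀ δ : ℝ, 0 < δ →
      ((Finset.univ.filter (fun f : (Fin n → Bool) → Bool =>
          ∃ ω : Fin n → Bool,
            2 * Real.sqrt (n * Real.log 2 + Real.log (4 / δ)) ≤
              ‖∑ ε : Fin n → Bool,
                (sgn (f ε) : ℂ) * bellCoeffOmega n θ₀ θ₁ ω ε‖)).card : ℝ) /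
          (Fintype.card ((Fin n → Bool) → Bool) : ℝ) ≤ δ) := by
  have hMpos : (0:ℝ) < (Fintype.card ((Fin n → Bool) → Bool) : ℝ) := by
    exact_mod_cast Fintype.card_pos
  have part1 : ∀ lam : ℝ, 0 < lam →
      ((Finset.univ.filter (fun f : (Fin n → Bool) → Bool =>
          ∃ ω : Fin n → Bool, lam ≤ ‖∑ ε : Fin n → Bool,
            (sgn (f ε) : ℂ) * bellCoeffOmega n θ₀ θ₁ ω ε‖)).card : ℝ) /
          (Fintype.card ((Fin n → Bool) → Bool) : ℝ) ≤
        2 ^ (n + 2) * Real.exp (-lam ^ 2 / 4) := by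
    intro lam hl
    rw [div_le_iff₀ hMpos]
    have hsub : (Finset.univ.filter (fun f : (Fin n → Bool) → Bool =>
        ∃ ω : Fin n → Bool, lam ≤ ‖∑ ε : Fin n → Bool,
          (sgn (f ε) : ℂ) * bellCoeffOmega n θ₀ θ₁ ω ε‖))
        ⊆ Finset.univ.biUnion (fun ω : Fin n → Bool =>
          Finset.univ.filter (fun f : (Fin n → Bool) → Bool =>
            lam ≤ ‖∑ ε : Fin n → Bool,
              (sgn (f ε) : ℂ) * bellCoeffOmega n θ₀ θ₁ ω ε‖)) := by
      intro f hf
      rw [Finset.mem_filter] at hf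
      obtain ⟨ω, hω⟩ := hf.2
      exact Finset.mem_biUnion.2 ⟨ω, Finset.mem_univ _,
        Finset.mem_filter.2 ⟨Finset.mem_univ _, hω⟩⟩
    have hcard : ((Finset.univ.filter (fun f : (Fin n → Bool) → Bool =>
        ∃ ω : Fin n → Bool, lam ≤ ‖∑ ε : Fin n → Bool,
          (sgn (f ε) : ℂ) * bellCoeffOmega n θ₀ θ₁ ω ε‖)).card : ℝ)
        ≤ ∑ ω : Fin n → Bool, ((Finset.univ.filter (fun f : (Fin n → Bool) → Bool =>
            lam ≤ ‖∑ ε : Fin n → Bool,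
              (sgn (f ε) : ℂ) * bellCoeffOmega n θ₀ θ₁ ω ε‖)).card : ℝ) := by
      have h1 := Finset.card_le_card hsub
      have h2 := Finset.card_biUnion_le (s := (Finset.univ : Finset (Fin n → Bool)))
        (t := fun ω : Fin n → Bool =>
          Finset.univ.filter (fun f : (Fin n → Bool) → Bool =>
            lam ≤ ‖∑ ε : Fin n → Bool,
              (sgn (f ε) : ℂ) * bellCoeffOmega n θ₀ θ₁ ω ε‖))
      exact_mod_cast le_trans h1 h2
    have hbound : ∑ ω : Fin n → Bool, ((Finset.univ.filter (fun f : (Fin n → Bool) → Bool =>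
          lam ≤ ‖∑ ε : Fin n → Bool,
            (sgn (f ε) : ℂ) * bellCoeffOmega n θ₀ θ₁ ω ε‖)).card : ℝ)
        ≤ (2:ℝ) ^ n * (4 * ((Fintype.card ((Fin n → Bool) → Bool) : ℝ) *
            Real.exp (-lam ^ 2 / 4))) := by
      calc ∑ ω : Fin n → Bool, ((Finset.univ.filter (fun f : (Fin n → Bool) → Bool =>
            lam ≤ ‖∑ ε : Fin n → Bool,
              (sgn (f ε) : ℂ) * bellCoeffOmega n θ₀ θ₁ ω ε‖)).card : ℝ)
          ≤ ∑ _ω : Fin n → Bool, (4 * ((Fintype.card ((Fin n → Bool) → Bool) : ℝ) *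
              Real.exp (-lam ^ 2 / 4))) :=
            Finset.sum_le_sum fun ω _ => single_omega n θ₀ θ₁ ω lam hl
        _ = (2:ℝ) ^ n * (4 * ((Fintype.card ((Fin n → Bool) → Bool) : ℝ) *
              Real.exp (-lam ^ 2 / 4))) := by
            rw [Finset.sum_const, nsmul_eq_mul]
            congr 1
            simp [Finset.card_univ]
    calc ((Finset.univ.filter (fun f : (Fin n → Bool) → Bool =>
        ∃ ω : Fin n → Bool, lam ≤ ‖∑ ε : Fin n → Bool,
          (sgn (f ε) : ℂ) * bellCoeffOmega n θ₀ θ₁ ω ε‖)).card : ℝ)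
        ≤ (2:ℝ) ^ n * (4 * ((Fintype.card ((Fin n → Bool) → Bool) : ℝ) *
            Real.exp (-lam ^ 2 / 4))) := le_trans hcard hbound
      _ = 2 ^ (n + 2) * Real.exp (-lam ^ 2 / 4) *
            (Fintype.card ((Fin n → Bool) → Bool) : ℝ) := by
          rw [pow_add]; ring
  refine ⟨part1, ?_⟩
  intro δ hδ
  set A : ℝ := n * Real.log 2 + Real.log (4 / δ) with hA
  by_cases hApos : 0 < A
  · have hl : 0 < 2 * Real.sqrt A := by positivity
    have h := part1 (2 * Real.sqrt A) hl
    have hsq : (2 * Real.sqrt A) ^ 2 = 4 * A := by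
      rw [mul_pow, Real.sq_sqrt hApos.le]; ring
    have hval : (2:ℝ) ^ (n + 2) * Real.exp (-(2 * Real.sqrt A) ^ 2 / 4) = δ := by
      rw [hsq]
      have : -(4 * A) / 4 = -A := by ring
      rw [this, Real.exp_neg, hA, Real.exp_add, Real.exp_nat_mul,
        Real.exp_log (by norm_num : (0:ℝ) < 2),
        Real.exp_log (by positivity : (0:ℝ) < 4 / δ)]
      field_simp
      rw [pow_add]; ring
    rw [hval] at h
    exact h
  · push_neg at hApos
    have hlog2 : (0:ℝ) ≤ n * Real.log 2 := by
      have := Real.log_nonneg (by norm_num : (1:ℝ) ≤ 2)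
      positivity
    have hlog4 : Real.log (4 / δ) ≤ 0 := by linarith [hA ▸ hApos]
    have h41 : 4 / δ ≤ 1 := by
      by_contra hcon
      push_neg at hcon
      exact absurd (Real.log_pos hcon) (not_lt.2 hlog4)
    have hδ4 : (4:ℝ) ≤ δ := by
      rw [div_le_one hδ] at h41
      linarith
    have hle1 : ((Finset.univ.filter (fun f : (Fin n → Bool) → Bool =>
        ∃ ω : Fin n → Bool,
          2 * Real.sqrt (n * Real.log 2 + Real.log (4 / δ)) ≤
            ‖∑ ε : Fin n → Bool,
              (sgn (f ε) : ℂ) * bellCoeffOmega n θ₀ θ₁ ω ε‖)).card : ℝ) /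
        (Fintype.card ((Fin n → Bool) → Bool) : ℝ) ≤ 1 := by
      rw [div_le_one hMpos]
      exact_mod_cast Finset.card_filter_le _ _
    linarith
end
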